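/- W''₁₃ W''₂₃ = W'₁₂* W''₂₃ W'₁₂ as bounded operators on H⊗H⊗H. -/

import Mathlib

noncomputable section

open scoped ComplexConjugate

private lemma anti_inner {E : Type*} [NormedAddCommGroup E] [InnerProductSpace ℂ E]
    (A : E → E) (hadd : ∀ x y, A (x + y) = A x + A y)
    (hsmul : ∀ (c : ℂ) (x : E), A (c • x) = conj c • A x)
    (hnorm : ∀ x, ‖A x‖ = ‖x‖) (x y : E) :
    (inner ℂ (A x) (A y) : ℂ) = conj (inner ℂ x y : ℂ) := by
  have hsub : ∀ u v : E, A (u - v) = A u - A v := by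
    intro u v
    have h := hadd (u - v) v
    rw [sub_add_cancel] at h
    rw [eq_sub_iff_add_eq, ← h]
  have h1 : ‖A x + A y‖ = ‖x + y‖ := by rw [← hadd, hnorm]
  have h2 : ‖A x - A y‖ = ‖x - y‖ := by rw [← hsub, hnorm]
  have hIy : Complex.I • A y = A ((-Complex.I) • y) := by
    rw [hsmul]; simp
  have h3 : ‖A x - Complex.I • A y‖ = ‖x + Complex.I • y‖ := by
    rw [hIy, ← hsub, show x - (-Complex.I) • y = x + Complex.I • y by rw [neg_smul, sub_neg_eq_add],
      hnorm]
  have h4 : ‖A x + Complex.I • A y‖ = ‖x - Complex.I • y‖ := by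
    rw [hIy, ← hadd, show x + (-Complex.I) • y = x - Complex.I • y by rw [neg_smul, ← sub_eq_add_neg],
      hnorm]
  rw [inner_eq_sum_norm_sq_div_four, inner_eq_sum_norm_sq_div_four (𝕜 := ℂ) x y]
  simp only [RCLike.I_to_complex, h1, h2, h3, h4, map_div₀, map_add, map_sub, map_mul, map_pow,
    Complex.conj_ofReal, RCLike.conj_ofReal, Complex.conj_I, map_ofNat]
  ring


private lemma dense_real_span {E : Type*} [NormedAddCommGroup E] [NormedSpace ℂ E]
    {s : Set E} (hI : ∀ x ∈ s, Complex.I • x ∈ s)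
    (h : Dense (Submodule.span ℂ s : Set E)) : Dense (Submodule.span ℝ s : Set E) := by
  have hIspan : ∀ y ∈ Submodule.span ℝ s, Complex.I • y ∈ Submodule.span ℝ s := by
    intro y hy
    induction hy using Submodule.span_induction with
    | mem x hx => exact Submodule.subset_span (hI x hx)
    | zero => simpa using Submodule.zero_mem (Submodule.span ℝ s)
    | add u v _ _ hu hv => rw [smul_add]; exact Submodule.add_mem _ hu hv
    | smul r u _ hu => rw [smul_comm]; exact Submodule.smul_mem _ r hu
  have hsub : (Submodule.span ℂ s : Set E) ⊆ (Submodule.span ℝ s : Set E) := by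
    intro x hx
    induction hx using Submodule.span_induction with
    | mem x hx => exact Submodule.subset_span hx
    | zero => exact Submodule.zero_mem _
    | add u v _ _ hu hv => exact Submodule.add_mem _ hu hv
    | smul c u _ hu =>
      have : c • u = c.re • u + c.im • (Complex.I • u) := by
        rw [RCLike.real_smul_eq_coe_smul (K := ℂ), RCLike.real_smul_eq_coe_smul (K := ℂ), smul_smul,
          ← add_smul]
        norm_num [Complex.re_add_im]
      rw [this]
      exact Submodule.add_mem _ (Submodule.smul_mem _ _ hu)
        (Submodule.smul_mem _ _ (hIspan u hu))
  exact h.mono hsub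


private lemma exists_conj_linear {E ι : Type*} [NormedAddCommGroup E] [InnerProductSpace ℂ E]
    [CompleteSpace E] (g g' : ι → E)
    (hgg' : ∀ p q, (inner ℂ (g' p) (g' q) : ℂ) = conj (inner ℂ (g p) (g q) : ℂ))
    (hdense : Dense (Submodule.span ℝ (Set.range g) : Set E)) :
    ∃ K : E →L[ℝ] E, ∀ p, K (g p) = g' p := by
  classical
  set π : (ι →₀ ℝ) →ₗ[ℝ] E := Finsupp.linearCombination ℝ g with hπdef
  set κ : (ι →₀ ℝ) →ₗ[ℝ] E := Finsupp.linearCombination ℝ g' with hκdef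
  have key : ∀ v w : ι →₀ ℝ, (inner ℂ (κ v) (κ w) : ℂ) = conj (inner ℂ (π v) (π w) : ℂ) := by
    intro v w
    rw [hπdef, hκdef]
    rw [Finsupp.linearCombination_apply, Finsupp.linearCombination_apply,
      Finsupp.linearCombination_apply, Finsupp.linearCombination_apply,
      Finsupp.sum, Finsupp.sum, Finsupp.sum, Finsupp.sum, sum_inner, sum_inner, map_sum]
    refine Finset.sum_congr rfl fun p _ => ?_
    rw [inner_sum, inner_sum, map_sum]
    refine Finset.sum_congr rfl fun q _ => ?_
    rw [RCLike.real_smul_eq_coe_smul (K := ℂ) (v p) (g p),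
      RCLike.real_smul_eq_coe_smul (K := ℂ) (w q) (g q),
      RCLike.real_smul_eq_coe_smul (K := ℂ) (v p) (g' p),
      RCLike.real_smul_eq_coe_smul (K := ℂ) (w q) (g' q),
      inner_smul_left, inner_smul_left, inner_smul_right, inner_smul_right, hgg']
    simp only [map_mul, Complex.conj_ofReal, Complex.conj_conj, RCLike.conj_ofReal]
  have hnormeq : ∀ v, ‖κ v‖ = ‖π v‖ := by
    intro v
    have h1 : (inner ℂ (κ v) (κ v) : ℂ) = inner ℂ (π v) (π v) := by
      rw [key, inner_self_conj]
    rw [norm_eq_sqrt_re_inner (𝕜 := ℂ) (κ v), norm_eq_sqrt_re_inner (𝕜 := ℂ) (π v), h1]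
  have hker : LinearMap.ker π ≤ LinearMap.ker κ := by
    intro v hv
    rw [LinearMap.mem_ker] at hv ⊢
    have h2 := hnormeq v
    rw [hv, norm_zero] at h2
    exact norm_eq_zero.mp h2
  set K₀ : ↥(LinearMap.range π) →ₗ[ℝ] E :=
    ((LinearMap.ker π).liftQ κ hker).comp π.quotKerEquivRange.symm.toLinearMap with hK₀def
  have hK₀apply : ∀ (v : ι →₀ ℝ) (h : π v ∈ LinearMap.range π), K₀ ⟨π v, h⟩ = κ v := by
    intro v h
    rw [hK₀def]
    simp only [LinearMap.coe_comp, Function.comp_apply, LinearEquiv.coe_toLinearMap]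
    rw [LinearMap.quotKerEquivRange_symm_apply_image]
    rw [Submodule.mkQ_apply, Submodule.liftQ_apply]
  have hK₀norm : ∀ s : ↥(LinearMap.range π), ‖K₀ s‖ ≤ 1 * ‖s‖ := by
    rintro ⟨x, v, rfl⟩
    rw [one_mul, hK₀apply v ⟨v, rfl⟩, hnormeq]
    rfl
  set K₀c : ↥(LinearMap.range π) →L[ℝ] E := K₀.mkContinuous 1 hK₀norm with hK₀cdef
  have hrange : LinearMap.range π = Submodule.span ℝ (Set.range g) := by
    rw [hπdef]; exact Finsupp.range_linearCombination ℝ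
  have hsingle : ∀ p, π (Finsupp.single p 1) = g p := by
    intro p
    rw [hπdef, Finsupp.linearCombination_single, one_smul]
  have hdr : DenseRange ((LinearMap.range π).subtypeL) := by
    have h3 : Set.range ((LinearMap.range π).subtypeL) = (LinearMap.range π : Set E) :=
      Subtype.range_coe
    rw [DenseRange, h3, hrange]
    exact hdense
  have hui : IsUniformInducing ((LinearMap.range π).subtypeL) :=
    isUniformEmbedding_subtype_val.isUniformInducing
  refine ⟨K₀c.extend (LinearMap.range π).subtypeL, fun p => ?_⟩
  have hmem : g p ∈ LinearMap.range π := ⟨Finsupp.single p 1, hsingle p⟩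
  have h1 : g p = (LinearMap.range π).subtypeL ⟨g p, hmem⟩ := rfl
  rw [h1, ContinuousLinearMap.extend_eq (h_dense := hdr) (h_e := hui)]
  have h2 : (⟨g p, hmem⟩ : ↥(LinearMap.range π)) =
      ⟨π (Finsupp.single p 1), LinearMap.mem_range_self π _⟩ := by
    apply Subtype.ext
    exact (hsingle p).symm
  rw [hK₀cdef]
  show K₀ _ = g' p
  rw [h2, hK₀apply, hκdef, Finsupp.linearCombination_single, one_smul]


theorem stmt_6
    {H H2 H3 : Type*}
    [NormedAddCommGroup H] [InnerProductSpace ℂ H] [CompleteSpace H]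
    [NormedAddCommGroup H2] [InnerProductSpace ℂ H2] [CompleteSpace H2]
    [NormedAddCommGroup H3] [InnerProductSpace ℂ H3] [CompleteSpace H3]
    -- the tensor map H × H → H ⊗ H = H2
    (τ : H →L[ℂ] H →L[ℂ] H2)
    (hτinner : ∀ a b c d : H, (inner ℂ (τ a b) (τ c d) : ℂ) = (inner ℂ a c : ℂ) * (inner ℂ b d : ℂ))
    (hτdense : Dense (Submodule.span ℂ (Set.range fun p : H × H => τ p.1 p.2) : Set H2))
    -- the tensor maps (H ⊗ H) × H → H ⊗ H ⊗ H = H3 and H × (H ⊗ H) → H ⊗ H ⊗ H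
    (m : H2 →L[ℂ] H →L[ℂ] H3)
    (m' : H →L[ℂ] H2 →L[ℂ] H3)
    (hmm' : ∀ a b c : H, m (τ a b) c = m' a (τ b c))
    (hminner : ∀ (u v : H2) (c d : H), (inner ℂ (m u c) (m v d) : ℂ) = (inner ℂ u v : ℂ) * (inner ℂ c d : ℂ))
    (hmdense : Dense (Submodule.span ℂ (Set.range fun p : (H × H) × H => m (τ p.1.1 p.1.2) p.2) : Set H3))
    -- the leg maps T ↦ T₁₂ = T ⊗ 1, T ↦ T₂₃ = 1 ⊗ T, T ↦ T₁₃ = (Σ⊗1)(1⊗T)(Σ⊗1)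
    (leg12 leg23 leg13 : (H2 →L[ℂ] H2) → (H3 →L[ℂ] H3))
    (hleg12 : ∀ (T : H2 →L[ℂ] H2) (u : H2) (c : H), leg12 T (m u c) = m (T u) c)
    (hleg23 : ∀ (T : H2 →L[ℂ] H2) (a : H) (v : H2), leg23 T (m' a v) = m' a (T v))
    -- the flip unitary Σ on H ⊗ H
    (Sg : H2 →L[ℂ] H2)
    (hSg : ∀ a b : H, Sg (τ a b) = τ b a)
    (hleg13 : ∀ T : H2 →L[ℂ] H2, leg13 T = leg12 Sg * leg23 T * leg12 Sg)
    -- the multiplicative unitary W, satisfying the pentagonal equation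
    (W : H2 →L[ℂ] H2)
    (hWl : W * star W = 1) (hWr : star W * W = 1)
    (hPent : leg12 W * leg13 W * leg23 W = leg23 W * leg12 W)
    -- J : a conjugate-linear isometric involution of H
    (J : H → H)
    (hJadd : ∀ x y : H, J (x + y) = J x + J y)
    (hJsmul : ∀ (c : ℂ) (x : H), J (c • x) = (starRingEnd ℂ) c • J x)
    (hJnorm : ∀ x : H, ‖J x‖ = ‖x‖)
    (hJinv : ∀ x : H, J (J x) = x)
    -- Jh : a conjugate-linear isometric involution of H
    (Jh : H → H)
    (hJhadd : ∀ x y : H, Jh (x + y) = Jh x + Jh y)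
    (hJhsmul : ∀ (c : ℂ) (x : H), Jh (c • x) = (starRingEnd ℂ) c • Jh x)
    (hJhnorm : ∀ x : H, ‖Jh x‖ = ‖x‖)
    (hJhinv : ∀ x : H, Jh (Jh x) = x)
    -- JJ : the conjugate-linear involution J⊗J of H ⊗ H
    (JJ : H2 → H2)
    (hJJadd : ∀ x y : H2, JJ (x + y) = JJ x + JJ y)
    (hJJsmul : ∀ (c : ℂ) (x : H2), JJ (c • x) = (starRingEnd ℂ) c • JJ x)
    (hJJnorm : ∀ x : H2, ‖JJ x‖ = ‖x‖)
    (hJJinv : ∀ x : H2, JJ (JJ x) = x)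
    (hJJtmul : ∀ a b : H, JJ (τ a b) = τ (J a) (J b))
    -- JJh : the conjugate-linear involution J⊗Ĵ of H ⊗ H
    (JJh : H2 → H2)
    (hJJhadd : ∀ x y : H2, JJh (x + y) = JJh x + JJh y)
    (hJJhsmul : ∀ (c : ℂ) (x : H2), JJh (c • x) = (starRingEnd ℂ) c • JJh x)
    (hJJhnorm : ∀ x : H2, ‖JJh x‖ = ‖x‖)
    (hJJhinv : ∀ x : H2, JJh (JJh x) = x)
    (hJJhtmul : ∀ a b : H, JJh (τ a b) = τ (J a) (Jh b))
    -- W' = (J⊗J) W (J⊗J), the commutant multiplicative unitary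
    (W' : H2 →L[ℂ] H2)
    (hW' : ∀ x : H2, W' x = JJ (W (JJ x)))
    -- W'' = (J⊗Ĵ) W (J⊗Ĵ) (in the quantum group setting, W'' = (W'ᵒᵖ)*)
    (W'' : H2 →L[ℂ] H2)
    (hW'' : ∀ x : H2, W'' x = JJh (W (JJh x)))
    :
    leg13 W'' * leg23 W'' = star (leg12 W') * leg23 W'' * leg12 W' := by
  -- dense real spans
  have hI2 : ∀ x ∈ Set.range (fun p : H × H => τ p.1 p.2), Complex.I • x ∈
      Set.range (fun p : H × H => τ p.1 p.2) := by
    rintro x ⟨⟨a, b⟩, rfl⟩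
    exact ⟨(Complex.I • a, b), by simp⟩
  have hI3 : ∀ x ∈ Set.range (fun p : (H × H) × H => m (τ p.1.1 p.1.2) p.2), Complex.I • x ∈
      Set.range (fun p : (H × H) × H => m (τ p.1.1 p.1.2) p.2) := by
    rintro x ⟨⟨⟨a, b⟩, c⟩, rfl⟩
    exact ⟨((Complex.I • a, b), c), by simp⟩
  have D2R := dense_real_span hI2 hτdense
  have D3R := dense_real_span hI3 hmdense
  -- extensionality lemmas
  have ext3R : ∀ (f g : H3 →L[ℝ] H3), (∀ a b c : H, f (m (τ a b) c) = g (m (τ a b) c)) → f = g := by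
    intro f g h
    refine ContinuousLinearMap.ext_on D3R ?_
    rintro x ⟨⟨⟨a, b⟩, c⟩, rfl⟩
    exact h a b c
  have ext3C : ∀ (f g : H3 →L[ℂ] H3), (∀ a b c : H, f (m (τ a b) c) = g (m (τ a b) c)) → f = g := by
    intro f g h
    refine ContinuousLinearMap.ext_on hmdense ?_
    rintro x ⟨⟨⟨a, b⟩, c⟩, rfl⟩
    exact h a b c
  have ext23R : ∀ (f g : H2 →L[ℝ] H3), (∀ a b : H, f (τ a b) = g (τ a b)) → f = g := by
    intro f g h
    refine ContinuousLinearMap.ext_on D2R ?_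
    rintro x ⟨⟨a, b⟩, rfl⟩
    exact h a b
  have eq3inner : ∀ x y : H3,
      (∀ a b c : H, (inner ℂ x (m (τ a b) c) : ℂ) = (inner ℂ y (m (τ a b) c) : ℂ)) → x = y := by
    intro x y h
    have h2 : innerSL ℂ x = innerSL ℂ y := by
      refine ContinuousLinearMap.ext_on hmdense ?_
      rintro v ⟨⟨⟨a, b⟩, c⟩, rfl⟩
      exact h a b c
    exact ext_inner_right ℂ fun v => DFunLike.congr_fun h2 v
  -- JJ, JJh as real-linear continuous maps
  let JJl : H2 →ₗ[ℝ] H2 :=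
    { toFun := JJ
      map_add' := hJJadd
      map_smul' := fun r x => by
        show JJ (r • x) = r • JJ x
        rw [RCLike.real_smul_eq_coe_smul (K := ℂ) r x,
          RCLike.real_smul_eq_coe_smul (K := ℂ) r (JJ x), hJJsmul, RCLike.conj_ofReal] }
  let JJR : H2 →L[ℝ] H2 := JJl.mkContinuous 1 (fun x => by
    rw [one_mul]; exact (hJJnorm x).le)
  have hJJR : ∀ x : H2, JJR x = JJ x := fun x => rfl
  let JJhl : H2 →ₗ[ℝ] H2 :=
    { toFun := JJh
      map_add' := hJJhadd
      map_smul' := fun r x => by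
        show JJh (r • x) = r • JJh x
        rw [RCLike.real_smul_eq_coe_smul (K := ℂ) r x,
          RCLike.real_smul_eq_coe_smul (K := ℂ) r (JJh x), hJJhsmul, RCLike.conj_ofReal] }
  let JJhR : H2 →L[ℝ] H2 := JJhl.mkContinuous 1 (fun x => by
    rw [one_mul]; exact (hJJhnorm x).le)
  have hJJhR : ∀ x : H2, JJhR x = JJh x := fun x => rfl
  -- the anti-unitary K = J ⊗ J ⊗ Ĵ on H3
  obtain ⟨K, hK0⟩ := exists_conj_linear (E := H3) (ι := (H × H) × H)
    (fun p => m (τ p.1.1 p.1.2) p.2) (fun p => m (τ (J p.1.1) (J p.1.2)) (Jh p.2))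
    (by
      rintro ⟨⟨a, b⟩, c⟩ ⟨⟨d, e⟩, f⟩
      simp only
      rw [hminner, hminner, hτinner, hτinner,
        anti_inner J hJadd hJsmul hJnorm, anti_inner J hJadd hJsmul hJnorm,
        anti_inner Jh hJhadd hJhsmul hJhnorm, map_mul, map_mul])
    D3R
  have hK : ∀ a b c : H, K (m (τ a b) c) = m (τ (J a) (J b)) (Jh c) :=
    fun a b c => hK0 ((a, b), c)
  -- K (m u c) = m (JJ u) (Jh c)
  have hK2 : ∀ (u : H2) (c : H), K (m u c) = m (JJ u) (Jh c) := by
    intro u c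
    have h := ext23R (K.comp ((m.flip c).restrictScalars ℝ))
      (((m.flip (Jh c)).restrictScalars ℝ).comp JJR) ?_
    · have := DFunLike.congr_fun h u
      simpa only [ContinuousLinearMap.coe_comp', Function.comp_apply,
        ContinuousLinearMap.coe_restrictScalars', ContinuousLinearMap.flip_apply, hJJR] using this
    · intro a b
      simp only [ContinuousLinearMap.coe_comp', Function.comp_apply,
        ContinuousLinearMap.coe_restrictScalars', ContinuousLinearMap.flip_apply, hJJR]
      rw [hK, hJJtmul]
  -- K (m' a v) = m' (J a) (JJh v)
  have hK3 : ∀ (a : H) (v : H2), K (m' a v) = m' (J a) (JJh v) := by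
    intro a v
    have h := ext23R (K.comp ((m' a).restrictScalars ℝ))
      (((m' (J a)).restrictScalars ℝ).comp JJhR) ?_
    · have := DFunLike.congr_fun h v
      simpa only [ContinuousLinearMap.coe_comp', Function.comp_apply,
        ContinuousLinearMap.coe_restrictScalars', hJJhR] using this
    · intro b c
      simp only [ContinuousLinearMap.coe_comp', Function.comp_apply,
        ContinuousLinearMap.coe_restrictScalars', hJJhR]
      rw [← hmm', hK, hmm', hJJhtmul]
  -- K is an involution
  have hKK : ∀ x : H3, K (K x) = x := by
    have h := ext3R (K.comp K) (ContinuousLinearMap.id ℝ H3) ?_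
    · intro x
      have := DFunLike.congr_fun h x
      simpa only [ContinuousLinearMap.coe_comp', Function.comp_apply,
        ContinuousLinearMap.coe_id', id_eq] using this
    · intro a b c
      simp only [ContinuousLinearMap.coe_comp', Function.comp_apply,
        ContinuousLinearMap.coe_id', id_eq]
      rw [hK, hK, hJinv, hJinv, hJhinv]
  -- conjugation identities
  have conj_of : ∀ (T T' : H3 →L[ℂ] H3),
      (∀ a b c : H, T' (m (τ a b) c) = K (T (K (m (τ a b) c)))) →
      (∀ x : H3, T' x = K (T (K x))) := by
    intro T T' hgen
    have h := ext3R (T'.restrictScalars ℝ)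
      (K.comp ((T.restrictScalars ℝ).comp K)) ?_
    · intro x
      have := DFunLike.congr_fun h x
      simpa only [ContinuousLinearMap.coe_comp', Function.comp_apply,
        ContinuousLinearMap.coe_restrictScalars'] using this
    · intro a b c
      simp only [ContinuousLinearMap.coe_comp', Function.comp_apply,
        ContinuousLinearMap.coe_restrictScalars']
      exact hgen a b c
  have h12 : ∀ x : H3, leg12 W' x = K (leg12 W (K x)) := by
    refine conj_of (leg12 W) (leg12 W') ?_
    intro a b c
    rw [hK, hleg12, hleg12, hK2, hJhinv, ← hJJtmul, ← hW']
  have h23 : ∀ x : H3, leg23 W'' x = K (leg23 W (K x)) := by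
    refine conj_of (leg23 W) (leg23 W'') ?_
    intro a b c
    rw [hK, hmm' a b c, hmm' (J a) (J b) (Jh c), hleg23, hleg23, hK3, hJinv, ← hJJhtmul, ← hW'']
  have hSgx : ∀ x : H3, leg12 Sg x = K (leg12 Sg (K x)) := by
    refine conj_of (leg12 Sg) (leg12 Sg) ?_
    intro a b c
    rw [hK, hleg12, hleg12, hSg, hSg, hK, hJinv, hJinv, hJhinv]
  have h13 : ∀ x : H3, leg13 W'' x = K (leg13 W (K x)) := by
    intro x
    rw [hleg13, hleg13]
    simp only [ContinuousLinearMap.mul_apply]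
    rw [hSgx (leg23 W'' ((leg12 Sg) x)), h23 ((leg12 Sg) x), hSgx x, hKK, hKK]
  have hPentx : ∀ y : H3, leg12 W (leg13 W (leg23 W y)) = leg23 W (leg12 W y) := by
    intro y
    have := DFunLike.congr_fun hPent y
    simpa only [ContinuousLinearMap.mul_apply] using this
  have hGoal : ∀ x : H3, leg12 W' (leg13 W'' (leg23 W'' x)) = leg23 W'' (leg12 W' x) := by
    intro x
    rw [h23 x, h13 (K (leg23 W (K x))), hKK, h12, hKK, hPentx, h23 (leg12 W' x), h12 x, hKK]
  have hGoalOp : leg12 W' * (leg13 W'' * leg23 W'') = leg23 W'' * leg12 W' := by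
    ext x
    simpa only [ContinuousLinearMap.mul_apply] using hGoal x
  -- star (leg12 W') = leg12 (star W')
  have hstar : star (leg12 W') = leg12 (star W') := by
    have hadj : leg12 (star W') = ContinuousLinearMap.adjoint (leg12 W') := by
      refine ext3C _ _ ?_
      intro a b c
      refine eq3inner _ _ ?_
      intro d e f
      rw [ContinuousLinearMap.adjoint_inner_left, hleg12, hleg12, hminner, hminner]
      congr 1
      rw [ContinuousLinearMap.star_eq_adjoint, ContinuousLinearMap.adjoint_inner_left]
    rw [hadj, ContinuousLinearMap.star_eq_adjoint]
  -- W' is an isometry, hence star W' * W' = 1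
  have hWiso : ∀ a b : H2, (inner ℂ (W a) (W b) : ℂ) = inner ℂ a b := by
    intro a b
    have h1 : ContinuousLinearMap.adjoint W (W a) = a := by
      have h2 : (star W * W) a = a := by rw [hWr, ContinuousLinearMap.one_apply]
      rwa [ContinuousLinearMap.mul_apply, ContinuousLinearMap.star_eq_adjoint] at h2
    rw [← ContinuousLinearMap.adjoint_inner_left W b (W a), h1]
  have hW'iso : ∀ x v : H2, (inner ℂ (W' x) (W' v) : ℂ) = inner ℂ x v := by
    intro x v
    rw [hW' x, hW' v, anti_inner JJ hJJadd hJJsmul hJJnorm, hWiso,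
      anti_inner JJ hJJadd hJJsmul hJJnorm, Complex.conj_conj]
  have hWW : star W' * W' = 1 := by
    refine ContinuousLinearMap.ext fun x => ?_
    refine ext_inner_right ℂ fun v => ?_
    rw [ContinuousLinearMap.mul_apply, ContinuousLinearMap.one_apply,
      ContinuousLinearMap.star_eq_adjoint, ContinuousLinearMap.adjoint_inner_left, hW'iso]
  have hmul12 : ∀ T S : H2 →L[ℂ] H2, leg12 T * leg12 S = leg12 (T * S) := by
    intro T S
    refine ext3C _ _ fun a b c => ?_
    rw [ContinuousLinearMap.mul_apply, hleg12, hleg12, hleg12, ContinuousLinearMap.mul_apply]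
  have hone12 : leg12 (1 : H2 →L[ℂ] H2) = 1 := by
    refine ext3C _ _ fun a b c => ?_
    rw [hleg12, ContinuousLinearMap.one_apply, ContinuousLinearMap.one_apply]
  have hkey : star (leg12 W') * leg12 W' = 1 := by
    rw [hstar, hmul12, hWW, hone12]
  calc leg13 W'' * leg23 W''
      = 1 * (leg13 W'' * leg23 W'') := (one_mul _).symm
    _ = star (leg12 W') * leg12 W' * (leg13 W'' * leg23 W'') := by rw [hkey]
    _ = star (leg12 W') * (leg12 W' * (leg13 W'' * leg23 W'')) := by rw [mul_assoc]
    _ = star (leg12 W') * (leg23 W'' * leg12 W') := by rw [hGoalOp]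
    _ = star (leg12 W') * leg23 W'' * leg12 W' := by rw [← mul_assoc]
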